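/- Let F = {f₁,…,fₘ} be an IFS where each fᵢ is a contraction with common ratio λ < 1 on a complete metric space X, and let K be the Hutchinson attractor, i.e. the unique non-empty compact set with K = ⋃ᵢ fᵢ(K). Then every point of K is recurrent: K ⊆ R_F. -/

import Mathlib

open Filter Metric Topology

/-- Composition of the IFS maps along a word. -/
def ifsComp {X : Type*} {m : ℕ} (f : Fin m → X → X) : List (Fin m) → X → X
  | [], x => x
  | i :: I, x => f i (ifsComp f I x)

/-- The limit set of a set under the IFS. -/
def limitSet {X : Type*} [MetricSpace X] {m : ℕ} (f : Fin m → X → X) (A : Set X) : Set X :=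
  {y | ∃ (I : ℕ → List (Fin m)) (a : ℕ → X), (∀ n, a n ∈ A) ∧
    Tendsto (fun n => (I n).length) atTop atTop ∧
    Tendsto (fun n => ifsComp f (I n) (a n)) atTop (nhds y)}

/-- The orbit of a point under the IFS. -/
def ifsOrbit {X : Type*} {m : ℕ} (f : Fin m → X → X) (x : X) : Set X :=
  {y | ∃ I : List (Fin m), ifsComp f I x = y}

/-- A point is recurrent if it belongs to the limit set of every point of its orbit. -/
def isRecurrent {X : Type*} [MetricSpace X] {m : ℕ} (f : Fin m → X → X) (x : X) : Prop :=
  ∀ z ∈ ifsOrbit f x, x ∈ limitSet f {z}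

lemma ifsComp_append {X : Type*} {m : ℕ} (f : Fin m → X → X) (I : List (Fin m))
    (j : Fin m) (x : X) : ifsComp f (I ++ [j]) x = ifsComp f I (f j x) := by
  induction I with
  | nil => rfl
  | cons i I ih => simp [ifsComp, ih]

lemma ifsComp_dist {X : Type*} [MetricSpace X] {m : ℕ} (f : Fin m → X → X)
    (lam : ℝ) (hlam0 : 0 ≤ lam)
    (hlip : ∀ i u v, dist (f i u) (f i v) ≤ lam * dist u v)
    (I : List (Fin m)) (u v : X) :
    dist (ifsComp f I u) (ifsComp f I v) ≤ lam ^ I.length * dist u v := by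
  induction I with
  | nil => simp [ifsComp]
  | cons i I ih =>
    calc dist (f i (ifsComp f I u)) (f i (ifsComp f I v))
        ≤ lam * dist (ifsComp f I u) (ifsComp f I v) := hlip _ _ _
      _ ≤ lam * (lam ^ I.length * dist u v) := by
          exact mul_le_mul_of_nonneg_left ih hlam0
      _ = lam ^ (i :: I).length * dist u v := by rw [List.length_cons, pow_succ]; ring

theorem stmt_6 {X : Type*} [MetricSpace X] [CompleteSpace X] {m : ℕ} (hm : 0 < m)
    (f : Fin m → X → X) (lam : ℝ) (hlam0 : 0 ≤ lam) (hlam1 : lam < 1)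
    (hlip : ∀ i u v, dist (f i u) (f i v) ≤ lam * dist u v)
    (K : Set X) (hKne : K.Nonempty) (hKc : IsCompact K)
    (hK : K = ⋃ i : Fin m, f i '' K) :
    ∀ x ∈ K, isRecurrent f x := by
  intro x hx z _
  -- every point of K has a preimage in K
  have hstep : ∀ y : X, y ∈ K → ∃ i : Fin m, ∃ y', y' ∈ K ∧ f i y' = y := by
    intro y hy
    rw [hK] at hy
    simp only [Set.mem_iUnion, Set.mem_image] at hy
    obtain ⟨i, y', hy', hfy⟩ := hy
    exact ⟨i, y', hy', hfy⟩
  choose gi gy hgyK hgf using hstep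
  -- backward orbit sequence in K
  set a : ℕ → {p : X // p ∈ K} :=
    fun n => Nat.rec ⟨x, hx⟩ (fun _ p => ⟨gy p.1 p.2, hgyK p.1 p.2⟩) n with ha
  -- words
  set W : ℕ → List (Fin m) :=
    fun n => Nat.rec [] (fun k L => L ++ [gi (a k).1 (a k).2]) n with hW
  have hWlen : ∀ n, (W n).length = n := by
    intro n
    induction n with
    | zero => rfl
    | succ k ih => simp [show W (k + 1) = W k ++ [gi (a k).1 (a k).2] from rfl, ih]
  have hWx : ∀ n, ifsComp f (W n) (a n).1 = x := by
    intro n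
    induction n with
    | zero => rfl
    | succ k ih =>
      have h1 : W (k + 1) = W k ++ [gi (a k).1 (a k).2] := rfl
      have h2 : (a (k + 1)).1 = gy (a k).1 (a k).2 := rfl
      rw [h1, h2, ifsComp_append, hgf]
      exact ih
  -- bound on distances from z to K
  obtain ⟨r, hr⟩ := hKc.isBounded.subset_closedBall z
  refine ⟨W, fun _ => z, fun _ => rfl, ?_, ?_⟩
  · have : (fun n => (W n).length) = id := funext hWlen
    rw [this]; exact tendsto_id
  · rw [tendsto_iff_dist_tendsto_zero]
    have hb : ∀ n, dist (ifsComp f (W n) z) x ≤ lam ^ n * r := by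
      intro n
      have h1 : dist (ifsComp f (W n) z) (ifsComp f (W n) (a n).1)
          ≤ lam ^ (W n).length * dist z (a n).1 :=
        ifsComp_dist f lam hlam0 hlip _ _ _
      have h2 : dist z (a n).1 ≤ r := by
        have := hr (a n).2
        rw [mem_closedBall] at this
        rw [dist_comm]; exact this
      calc dist (ifsComp f (W n) z) x
          = dist (ifsComp f (W n) z) (ifsComp f (W n) (a n).1) := by rw [hWx n]
        _ ≤ lam ^ (W n).length * dist z (a n).1 := h1
        _ ≤ lam ^ n * r := by
            rw [hWlen n]
            exact mul_le_mul_of_nonneg_left h2 (pow_nonneg hlam0 n)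
    have h0 : Tendsto (fun n => lam ^ n * r) atTop (nhds 0) := by
      have := (tendsto_pow_atTop_nhds_zero_of_lt_one hlam0 hlam1).mul_const r
      simpa using this
    exact squeeze_zero (fun n => dist_nonneg) hb h0
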